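/- For every X ∈ ℝ^{n×2} one has det(B(X)) = 1. -/

import Mathlib

open Matrix BigOperators

noncomputable section

/-- Frobenius inner product of matrices. -/
def frobInner {m k : ℕ} (X Y : Matrix (Fin m) (Fin k) ℝ) : ℝ :=
  ∑ i, ∑ j, X i j * Y i j

/-- Frobenius norm of a matrix. -/
def frobNorm {m k : ℕ} (X : Matrix (Fin m) (Fin k) ℝ) : ℝ :=
  Real.sqrt (frobInner X X)

/-- The area integrand `𝒜(X) = √(1 + ‖X‖² + det(XᵀX))`. -/
def Area {n : ℕ} (X : Matrix (Fin n) (Fin 2) ℝ) : ℝ :=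
  Real.sqrt (1 + frobInner X X + (Xᵀ * X).det)

/-- The symplectic matrix `J = [[0,1],[−1,0]]`. -/
def symJ : Matrix (Fin 2) (Fin 2) ℝ := !![0, 1; -1, 0]

/-- The gradient of a function on matrix space, given by entrywise partial derivatives. -/
def grad {n : ℕ} (f : Matrix (Fin n) (Fin 2) ℝ → ℝ) (X : Matrix (Fin n) (Fin 2) ℝ) :
    Matrix (Fin n) (Fin 2) ℝ :=
  fun i j => deriv (fun t : ℝ => f (X + t • Matrix.single i j 1)) 0

/-- `A(X) = D𝒜(X)J`. -/
def matA {n : ℕ} (X : Matrix (Fin n) (Fin 2) ℝ) : Matrix (Fin n) (Fin 2) ℝ :=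
  grad Area X * symJ

/-- `B(X) = XᵀD𝒜(X)J − 𝒜(X)J`. -/
def matB {n : ℕ} (X : Matrix (Fin n) (Fin 2) ℝ) : Matrix (Fin 2) (Fin 2) ℝ :=
  Xᵀ * grad Area X * symJ - Area X • symJ

-- entry expansion lemma
lemma entry_sum {n : ℕ} (X : Matrix (Fin n) (Fin 2) ℝ) (i : Fin n) (j a b : Fin 2) (t : ℝ) :
    ((X + t • Matrix.single i j (1:ℝ))ᵀ * (X + t • Matrix.single i j (1:ℝ))) a b =
      (Xᵀ * X) a b
        + t * ((if j = a then X i b else 0) + (if j = b then X i a else 0))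
        + t ^ 2 * (if j = a ∧ j = b then 1 else 0) := by
  classical
  simp only [mul_apply, Matrix.add_apply, transpose_apply, Matrix.smul_apply, smul_eq_mul]
  have key : ∀ r, (X r a + t * Matrix.single i j (1:ℝ) r a) * (X r b + t * Matrix.single i j (1:ℝ) r b)
      = X r a * X r b + t * (Matrix.single i j (1:ℝ) r a * X r b + X r a * Matrix.single i j (1:ℝ) r b)
        + t ^ 2 * (Matrix.single i j (1:ℝ) r a * Matrix.single i j (1:ℝ) r b) := fun r => by ring
  rw [Finset.sum_congr rfl fun r _ => key r, Finset.sum_add_distrib, Finset.sum_add_distrib,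
    ← Finset.mul_sum, ← Finset.mul_sum, Finset.sum_add_distrib]
  simp [Matrix.single, ite_and, mul_ite, ite_mul, Finset.sum_ite_eq]
  ring_nf
  split_ifs <;> ring

lemma frob_eq {n : ℕ} (Y : Matrix (Fin n) (Fin 2) ℝ) :
    frobInner Y Y = (Yᵀ*Y) 0 0 + (Yᵀ*Y) 1 1 := by
  simp only [frobInner, mul_apply, transpose_apply, Fin.sum_univ_two]
  rw [← Finset.sum_add_distrib]

lemma M_symm {n : ℕ} (X : Matrix (Fin n) (Fin 2) ℝ) : (Xᵀ*X) 1 0 = (Xᵀ*X) 0 1 := by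
  simp [mul_apply, transpose_apply, mul_comm]

lemma det_nonneg' {n : ℕ} (X : Matrix (Fin n) (Fin 2) ℝ) : 0 ≤ (Xᵀ*X).det := by
  rw [Matrix.det_fin_two]
  simp only [mul_apply, transpose_apply]
  have h := Finset.sum_mul_sq_le_sq_mul_sq Finset.univ (fun r => X r 0) (fun r => X r 1)
  simp only [sq] at h
  have e1 : ∑ r, X r 1 * X r 0 = ∑ r, X r 0 * X r 1 := by
    exact Finset.sum_congr rfl fun r _ => mul_comm _ _
  rw [e1]; nlinarith [h]

lemma frob_nonneg {n : ℕ} (X : Matrix (Fin n) (Fin 2) ℝ) : 0 ≤ frobInner X X := by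
  refine Finset.sum_nonneg fun i _ => Finset.sum_nonneg fun j _ => mul_self_nonneg _

lemma one_le_q {n : ℕ} (X : Matrix (Fin n) (Fin 2) ℝ) :
    1 ≤ 1 + frobInner X X + (Xᵀ*X).det := by
  nlinarith [det_nonneg' X, frob_nonneg X]

lemma area_pos {n : ℕ} (X : Matrix (Fin n) (Fin 2) ℝ) : 0 < Area X := by
  apply Real.sqrt_pos.2; linarith [one_le_q X]

lemma area_sq {n : ℕ} (X : Matrix (Fin n) (Fin 2) ℝ) :
    Area X * Area X = 1 + frobInner X X + (Xᵀ*X).det := by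
  exact Real.mul_self_sqrt (by linarith [one_le_q X])

lemma hasDeriv_main {n : ℕ} (X : Matrix (Fin n) (Fin 2) ℝ) (i : Fin n) (j : Fin 2) :
    HasDerivAt (fun t : ℝ => 1 + frobInner (X + t • Matrix.single i j (1:ℝ)) (X + t • Matrix.single i j (1:ℝ)) + (((X + t • Matrix.single i j (1:ℝ))ᵀ * (X + t • Matrix.single i j (1:ℝ))).det))
      (2 * (X i j + (X * (Xᵀ*X).adjugate) i j)) 0 := by
  classical
  have hfun : ∀ a b : Fin 2, HasDerivAt
      (fun t : ℝ => (Xᵀ*X) a b + t * ((if j = a then X i b else 0) + (if j = b then X i a else 0))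
        + t ^ 2 * (if j = a ∧ j = b then (1:ℝ) else 0))
      ((if j = a then X i b else 0) + (if j = b then X i a else 0)) 0 := by
    intro a b
    have h1 : HasDerivAt (fun t : ℝ => t * ((if j = a then X i b else 0) + (if j = b then X i a else 0)))
        ((if j = a then X i b else 0) + (if j = b then X i a else 0)) 0 := by
      simpa using (hasDerivAt_id (0:ℝ)).mul_const _
    have h2 : HasDerivAt (fun t : ℝ => t ^ 2 * (if j = a ∧ j = b then (1:ℝ) else 0)) 0 0 := by
      simpa using (hasDerivAt_pow 2 (0:ℝ)).mul_const (if j = a ∧ j = b then (1:ℝ) else 0)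
    have := (h1.const_add ((Xᵀ*X) a b)).add h2
    simp only [add_zero] at this
    exact this
  have hcomb := (((hfun 0 0).add (hfun 1 1)).const_add 1).add
    (((hfun 0 0).mul (hfun 1 1)).sub ((hfun 0 1).mul (hfun 1 0)))
  have hfe : (fun t : ℝ => 1 + frobInner (X + t • Matrix.single i j (1:ℝ)) (X + t • Matrix.single i j (1:ℝ)) + (((X + t • Matrix.single i j (1:ℝ))ᵀ * (X + t • Matrix.single i j (1:ℝ))).det))
      = (fun t : ℝ =>
        (1 + (((Xᵀ*X) 0 0 + t * ((if j = 0 then X i 0 else 0) + (if j = 0 then X i 0 else 0)) + t^2 * (if j = 0 ∧ j = 0 then (1:ℝ) else 0))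
          + ((Xᵀ*X) 1 1 + t * ((if j = 1 then X i 1 else 0) + (if j = 1 then X i 1 else 0)) + t^2 * (if j = 1 ∧ j = 1 then (1:ℝ) else 0))))
        + (((Xᵀ*X) 0 0 + t * ((if j = 0 then X i 0 else 0) + (if j = 0 then X i 0 else 0)) + t^2 * (if j = 0 ∧ j = 0 then (1:ℝ) else 0))
            * ((Xᵀ*X) 1 1 + t * ((if j = 1 then X i 1 else 0) + (if j = 1 then X i 1 else 0)) + t^2 * (if j = 1 ∧ j = 1 then (1:ℝ) else 0))
          - ((Xᵀ*X) 0 1 + t * ((if j = 0 then X i 1 else 0) + (if j = 1 then X i 0 else 0)) + t^2 * (if j = 0 ∧ j = 1 then (1:ℝ) else 0))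
            * ((Xᵀ*X) 1 0 + t * ((if j = 1 then X i 0 else 0) + (if j = 0 then X i 1 else 0)) + t^2 * (if j = 1 ∧ j = 0 then (1:ℝ) else 0)))) := by
    funext t
    rw [frob_eq, Matrix.det_fin_two, entry_sum, entry_sum, entry_sum, entry_sum]
    try ring
  rw [hfe]
  refine hcomb.congr_deriv ?_
  have hs : ∑ x, X x 1 * X x 0 = ∑ x, X x 0 * X x 1 := Finset.sum_congr rfl fun r _ => mul_comm _ _
  fin_cases j <;>
    simp [Matrix.adjugate_fin_two, mul_apply, Fin.sum_univ_two, M_symm X, hs] <;> try ring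

lemma grad_area {n : ℕ} (X : Matrix (Fin n) (Fin 2) ℝ) :
    grad Area X = (Area X)⁻¹ • (X + X * (Xᵀ*X).adjugate) := by
  funext i j
  have hA := area_pos X
  have hne : (1 + frobInner X X + (Xᵀ*X).det) ≠ 0 := by linarith [one_le_q X]
  have hsq := Real.hasDerivAt_sqrt hne
  have hq := hasDeriv_main X i j
  have h0 : (1 + frobInner X X + (Xᵀ*X).det) =
      (1 + frobInner (X + (0:ℝ) • Matrix.single i j (1:ℝ)) (X + (0:ℝ) • Matrix.single i j (1:ℝ)) + (((X + (0:ℝ) • Matrix.single i j (1:ℝ))ᵀ * (X + (0:ℝ) • Matrix.single i j (1:ℝ))).det)) := by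
    simp
  rw [h0] at hsq
  have hd := HasDerivAt.comp (0:ℝ) hsq hq
  have hAe : Real.sqrt (1 + frobInner X X + (Xᵀ*X).det) = Area X := rfl
  have hgr : grad Area X i j
      = 1 / (2 * Area X) * (2 * (X i j + (X * (Xᵀ*X).adjugate) i j)) := by
    show deriv (fun t : ℝ => Area (X + t • Matrix.single i j 1)) 0 = _
    rw [show (fun t : ℝ => Area (X + t • Matrix.single i j 1))
        = Real.sqrt ∘ (fun t : ℝ => 1 + frobInner (X + t • Matrix.single i j (1:ℝ)) (X + t • Matrix.single i j (1:ℝ)) + (((X + t • Matrix.single i j (1:ℝ))ᵀ * (X + t • Matrix.single i j (1:ℝ))).det)) from rfl]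
    rw [hd.deriv, ← h0, hAe]
  rw [hgr]
  simp only [Matrix.smul_apply, Matrix.add_apply, smul_eq_mul]
  field_simp


/-- For every `X ∈ ℝ^{n×2}` one has `det(B(X)) = 1`. -/
theorem matB_det_eq_one {n : ℕ} (hn : 1 ≤ n) (X : Matrix (Fin n) (Fin 2) ℝ) :
    (matB X).det = 1 := by
  have hA := area_pos X
  have hAne : Area X ≠ 0 := ne_of_gt hA
  have hB : matB X = (Area X)⁻¹ • (((Xᵀ*X) + (Xᵀ*X).det • (1 : Matrix (Fin 2) (Fin 2) ℝ)) * symJ) - Area X • symJ := by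
    rw [matB, grad_area, Matrix.mul_smul, Matrix.smul_mul, Matrix.mul_add, ← Matrix.mul_assoc,
      Matrix.mul_adjugate]
  have hsq := area_sq X
  rw [frob_eq] at hsq
  obtain ⟨N, hN⟩ : ∃ N, Xᵀ*X = N := ⟨_, rfl⟩
  have hsymm : N 1 0 = N 0 1 := by rw [← hN]; exact M_symm X
  rw [hN] at hB hsq
  rw [hB, Matrix.det_fin_two]
  rw [Matrix.det_fin_two, hsymm] at hsq ⊢
  simp only [Matrix.sub_apply, Matrix.smul_apply, Matrix.mul_apply, Fin.sum_univ_two,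
    Matrix.add_apply, Matrix.one_apply, smul_eq_mul, symJ, Matrix.cons_val', Matrix.cons_val_zero,
    Matrix.cons_val_one, Matrix.head_cons, Matrix.empty_val', Matrix.cons_val_fin_one,
    Matrix.head_fin_const, hsymm]
  norm_num
  field_simp
  ring_nf
  have h2 : Area X ^ 2 = 1 + (N 0 0 + N 1 1) + (N 0 0 * N 1 1 - N 0 1 * N 0 1) := by
    rw [sq, hsq]
  have h4 : Area X ^ 4 = (1 + (N 0 0 + N 1 1) + (N 0 0 * N 1 1 - N 0 1 * N 0 1)) ^ 2 := by
    rw [show Area X ^ 4 = (Area X ^ 2) ^ 2 from by ring, h2]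
  have h6 : Area X ^ 6 = (1 + (N 0 0 + N 1 1) + (N 0 0 * N 1 1 - N 0 1 * N 0 1)) ^ 3 := by
    rw [show Area X ^ 6 = (Area X ^ 2) ^ 3 from by ring, h2]
  rw [h4, h2]
  ring


end
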